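/- Let (τ, ζ, v, σ) and (τ', ζ', v', σ') be two vertices of the graph H_λ (the graph G_λ with affine edges removed). They lie in the same connected component if and only if T(τ, v) = T(τ', v'), where T(τ, v) is the filling of the shape λ obtained by replacing each entry i of τ by v⁺[i]. -/

import Mathlib

/-- `σ` is an adjacent transposition `s_i = (i, i+1)`. -/
def IsAdjTrans {N : ℕ} (σ : Equiv.Perm (Fin N)) : Prop :=
  ∃ i j : Fin N, (j : ℕ) = (i : ℕ) + 1 ∧ σ = Equiv.swap i j

/-- The length of a permutation: the minimal number of adjacent transpositions
needed to write it. -/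
noncomputable def permLength {N : ℕ} (σ : Equiv.Perm (Fin N)) : ℕ :=
  sInf {k | ∃ l : List (Equiv.Perm (Fin N)),
    l.length = k ∧ (∀ τ ∈ l, IsAdjTrans τ) ∧ l.prod = σ}

/-- `σ` is the (unique) minimal-length permutation with `v = w ∘ σ`, where `w`
is weakly decreasing, i.e. `w = v⁺` and `σ = σ_v`. -/
def IsMinDecomp {N : ℕ} (v w : Fin N → ℕ) (σ : Equiv.Perm (Fin N)) : Prop :=
  (∀ i j : Fin N, i ≤ j → w j ≤ w i) ∧ (v = fun k => w (σ k)) ∧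
  ∀ σ' : Equiv.Perm (Fin N), (v = fun k => w (σ' k)) →
    permLength σ ≤ permLength σ'

/-- A reverse standard tableau of shape the diagram `D`, given by its position
function `pos : entries → boxes (row, col)`: a bijective filling of `D` with
`1, ..., N`, strictly decreasing along each row and each column. -/
def IsRST (n : ℕ) (D : Finset (ℕ × ℕ)) (pos : Fin (n + 1) → ℕ × ℕ) : Prop :=
  Function.Injective pos ∧ (∀ i, pos i ∈ D) ∧ (∀ b ∈ D, ∃ i, pos i = b) ∧
  (∀ i j : Fin (n + 1), (pos i).1 = (pos j).1 → (pos i).2 < (pos j).2 → j < i) ∧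
  (∀ i j : Fin (n + 1), (pos i).2 = (pos j).2 → (pos i).1 < (pos j).1 → j < i)

/-- The content `CT_τ[i] = col(i) − row(i)` of the entry `i` in the tableau. -/
def tabContent {n : ℕ} (pos : Fin (n + 1) → ℕ × ℕ) (i : Fin (n + 1)) : ℤ :=
  ((pos i).2 : ℤ) - ((pos i).1 : ℤ)

/-- The filling `τ^{(a,b)}` obtained by exchanging the entries `a` and `b`. -/
def swapEntries {n : ℕ} (pos : Fin (n + 1) → ℕ × ℕ) (a b : Fin (n + 1)) :
    Fin (n + 1) → ℕ × ℕ :=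
  fun k => pos (Equiv.swap a b k)

/-- A vertex of the Yang–Baxter graph: a 4-tuple `(τ, ζ, v, σ)` of a tableau,
a spectral vector with entries in `ℤ[α]`, a weight, and a permutation. -/
abbrev YBVertex (n : ℕ) :=
  (Fin (n + 1) → ℕ × ℕ) × (Fin (n + 1) → Polynomial ℤ) × (Fin (n + 1) → ℕ) ×
    Equiv.Perm (Fin (n + 1))

/-- The affine operation `vΨ = (v[2], ..., v[N], v[1] + 1)`. -/
def vPsi {n : ℕ} (v : Fin (n + 1) → ℕ) : Fin (n + 1) → ℕ :=
  fun k => if h : (k : ℕ) + 1 < n + 1 then v ⟨(k : ℕ) + 1, h⟩ else v 0 + 1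

/-- The affine operation `ζΨ^α = (ζ[2], ..., ζ[N], ζ[1] + α)` on spectral
vectors, with `α = X`. -/
noncomputable def zetaPsi {n : ℕ} (ζ : Fin (n + 1) → Polynomial ℤ) :
    Fin (n + 1) → Polynomial ℤ :=
  fun k => if h : (k : ℕ) + 1 < n + 1 then ζ ⟨(k : ℕ) + 1, h⟩
    else ζ 0 + Polynomial.X

/-- The edges of the Yang–Baxter graph `G_λ` (`λ` given by the diagram `D`):
steps `s_i` with `v[i] < v[i+1]`; correct jumps `s_i` with `v[i] = v[i+1]`,
`σ[i]` south-east of `σ[i+1]` and the swapped filling again an RST; and the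
affine edges `Ψ`.  (Falls are omitted.) -/
inductive GStep (n : ℕ) (D : Finset (ℕ × ℕ)) : YBVertex n → YBVertex n → Prop
  | step (τ : Fin (n + 1) → ℕ × ℕ) (ζ : Fin (n + 1) → Polynomial ℤ)
      (v : Fin (n + 1) → ℕ) (σ : Equiv.Perm (Fin (n + 1)))
      (i j : Fin (n + 1)) (hj : (j : ℕ) = (i : ℕ) + 1) (hlt : v i < v j) :
      GStep n D (τ, ζ, v, σ)
        (τ, fun k => ζ (Equiv.swap i j k), fun k => v (Equiv.swap i j k),
          σ * Equiv.swap i j)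
  | jump (τ : Fin (n + 1) → ℕ × ℕ) (ζ : Fin (n + 1) → Polynomial ℤ)
      (v : Fin (n + 1) → ℕ) (σ : Equiv.Perm (Fin (n + 1)))
      (i j : Fin (n + 1)) (hj : (j : ℕ) = (i : ℕ) + 1) (heq : v i = v j)
      (hse : tabContent τ (σ j) + 2 ≤ tabContent τ (σ i))
      (hrst : IsRST n D (swapEntries τ (σ i) (σ j))) :
      GStep n D (τ, ζ, v, σ)
        (swapEntries τ (σ i) (σ j), fun k => ζ (Equiv.swap i j k), v, σ)
  | affine (τ : Fin (n + 1) → ℕ × ℕ) (ζ : Fin (n + 1) → Polynomial ℤ)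
      (v : Fin (n + 1) → ℕ) (σ : Equiv.Perm (Fin (n + 1))) :
      GStep n D (τ, ζ, v, σ) (τ, zetaPsi ζ, vPsi v, σ * finRotate (n + 1))

/-- The root of the graph: `(τ₀, CT_{τ₀}, 0^N, id)`. -/
noncomputable def rootVertex {n : ℕ} (τ0 : Fin (n + 1) → ℕ × ℕ) : YBVertex n :=
  (τ0, fun i => Polynomial.C (tabContent τ0 i), fun _ => 0, 1)

/-- The edges of the graph `H_λ`: the graph `G_λ` with the affine edges (and
falls) removed, i.e. only the steps and the correct jumps. -/
inductive HStep (n : ℕ) (D : Finset (ℕ × ℕ)) : YBVertex n → YBVertex n → Prop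
  | step (τ : Fin (n + 1) → ℕ × ℕ) (ζ : Fin (n + 1) → Polynomial ℤ)
      (v : Fin (n + 1) → ℕ) (σ : Equiv.Perm (Fin (n + 1)))
      (i j : Fin (n + 1)) (hj : (j : ℕ) = (i : ℕ) + 1) (hlt : v i < v j) :
      HStep n D (τ, ζ, v, σ)
        (τ, fun k => ζ (Equiv.swap i j k), fun k => v (Equiv.swap i j k),
          σ * Equiv.swap i j)
  | jump (τ : Fin (n + 1) → ℕ × ℕ) (ζ : Fin (n + 1) → Polynomial ℤ)
      (v : Fin (n + 1) → ℕ) (σ : Equiv.Perm (Fin (n + 1)))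
      (i j : Fin (n + 1)) (hj : (j : ℕ) = (i : ℕ) + 1) (heq : v i = v j)
      (hse : tabContent τ (σ j) + 2 ≤ tabContent τ (σ i))
      (hrst : IsRST n D (swapEntries τ (σ i) (σ j))) :
      HStep n D (τ, ζ, v, σ)
        (swapEntries τ (σ i) (σ j), fun k => ζ (Equiv.swap i j k), v, σ)

/-- The filling `T(τ, v)` of the diagram obtained by replacing each entry `i`
of `τ` by `v⁺[i]` (here `w = v⁺` is the decreasing rearrangement of `v`),
given as a function from boxes to values (and `0` off the diagram). -/
def Tfill {n : ℕ} (pos : Fin (n + 1) → ℕ × ℕ) (w : Fin (n + 1) → ℕ) :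
    ℕ × ℕ → ℕ :=
  fun b => ∑ i, if pos i = b then w i else 0
section Aux

open Polynomial Finset

/-- content of a box -/
def ctb (b : ℕ × ℕ) : ℤ := (b.2 : ℤ) - (b.1 : ℤ)

lemma tabContent_eq_ctb {n : ℕ} (pos : Fin (n+1) → ℕ × ℕ) (i : Fin (n+1)) :
    tabContent pos i = ctb (pos i) := rfl

/-- a pair of boxes whose relative entry order can never change -/
def rigid (β γ : ℕ × ℕ) : Prop :=
  β.1 = γ.1 ∨ β.2 = γ.2 ∨ (ctb β - ctb γ).natAbs ≤ 1

lemma rigid_symm {β γ : ℕ × ℕ} (h : rigid β γ) : rigid γ β := by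
  rcases h with h | h | h
  · exact Or.inl h.symm
  · exact Or.inr (Or.inl h.symm)
  · exact Or.inr (Or.inr (by omega))

/-- order preservation of an adjacent swap away from the swapped pair -/
lemma swap_adj_lt {N : ℕ} {i j x y : Fin N} (hj : (j : ℕ) = (i : ℕ) + 1)
    (hxy : x < y) (hne : ¬(x = i ∧ y = j)) :
    Equiv.swap i j x < Equiv.swap i j y := by
  have hij : i ≠ j := by intro h; rw [h] at hj; omega
  by_cases hxi : x = i
  · have hyj : y ≠ j := fun h => hne ⟨hxi, h⟩
    by_cases hyi : y = i
    · exact absurd (hyi ▸ hxi ▸ rfl : x = y) (ne_of_lt hxy)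
    · rw [hxi, Equiv.swap_apply_left, Equiv.swap_apply_of_ne_of_ne hyi hyj]
      rw [Fin.lt_def] at *
      rw [hxi] at hxy
      omega
  · by_cases hxj : x = j
    · have hyi : y ≠ i := by
        intro h; rw [hxj, h, Fin.lt_def] at hxy; omega
      have hyj : y ≠ j := by intro h; rw [hxj, h] at hxy; exact lt_irrefl _ hxy
      rw [hxj, Equiv.swap_apply_right, Equiv.swap_apply_of_ne_of_ne hyi hyj]
      rw [Fin.lt_def] at *
      rw [hxj] at hxy
      omega
    · rw [Equiv.swap_apply_of_ne_of_ne hxi hxj]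
      by_cases hyi : y = i
      · rw [hyi, Equiv.swap_apply_left]
        rw [Fin.lt_def] at *; rw [hyi] at hxy; omega
      · by_cases hyj : y = j
        · rw [hyj, Equiv.swap_apply_right]
          rw [Fin.lt_def] at *; rw [hyj] at hxy; omega
        · rw [Equiv.swap_apply_of_ne_of_ne hyi hyj]; exact hxy

/-- number of ascending pairs -/
def invcA {N : ℕ} (v : Fin N → ℕ) : ℕ :=
  (Finset.univ.filter (fun p : Fin N × Fin N => p.1 < p.2 ∧ v p.1 < v p.2)).card

/-- number of descending pairs (for permutations) -/
def invcD {N : ℕ} (g : Equiv.Perm (Fin N)) : ℕ :=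
  (Finset.univ.filter (fun p : Fin N × Fin N => p.1 < p.2 ∧ g p.2 < g p.1)).card
lemma invcA_swap_lt' {N : ℕ} {v : Fin N → ℕ} {i j : Fin N} (hj : (j : ℕ) = (i : ℕ) + 1)
    (hlt : v i < v j) :
    invcA (fun k => v (Equiv.swap i j k)) < invcA v := by
  classical
  set sw := Equiv.swap i j with hswdef
  have hswi : sw i = j := Equiv.swap_apply_left i j
  have hswj : sw j = i := Equiv.swap_apply_right i j
  have hswsw : ∀ x, sw (sw x) = x := fun x => Equiv.swap_apply_self i j x
  have hij : i < j := by rw [Fin.lt_def]; omega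
  set S := Finset.univ.filter (fun p : Fin N × Fin N => p.1 < p.2 ∧ v p.1 < v p.2) with hS
  set S' := Finset.univ.filter
    (fun p : Fin N × Fin N => p.1 < p.2 ∧ v (sw p.1) < v (sw p.2)) with hS'
  have hmem : (i, j) ∈ S := by simp [hS, hij, hlt]
  have hcard : S'.card = (S.erase (i, j)).card := by
    apply Finset.card_bij' (fun p _ => (sw p.1, sw p.2)) (fun q _ => (sw q.1, sw q.2))
    · intro p hp
      simp only [hS', Finset.mem_filter, Finset.mem_univ, true_and] at hp
      obtain ⟨h1, h2⟩ := hp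
      have hpne : ¬(p.1 = i ∧ p.2 = j) := by
        rintro ⟨e1, e2⟩; rw [e1, e2, hswi, hswj] at h2; omega
      have hlt2 := swap_adj_lt hj h1 hpne
      refine Finset.mem_erase.mpr ⟨?_, ?_⟩
      · intro he
        have e1 : sw p.1 = i := congrArg Prod.fst he
        have e2 : sw p.2 = j := congrArg Prod.snd he
        have f1 : p.1 = j := by rw [← hswsw p.1, e1, hswi]
        have f2 : p.2 = i := by rw [← hswsw p.2, e2, hswj]
        rw [f1, f2] at h1; exact absurd h1 (not_lt.mpr (le_of_lt hij))
      · simp only [hS, Finset.mem_filter, Finset.mem_univ, true_and]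
        exact ⟨hlt2, h2⟩
    · intro q hq
      obtain ⟨hqne, hq⟩ := Finset.mem_erase.mp hq
      simp only [hS, Finset.mem_filter, Finset.mem_univ, true_and] at hq
      obtain ⟨h1, h2⟩ := hq
      have hqne' : ¬(q.1 = i ∧ q.2 = j) := by
        rintro ⟨e1, e2⟩; exact hqne (Prod.ext e1 e2)
      have hlt2 := swap_adj_lt hj h1 hqne'
      simp only [hS', Finset.mem_filter, Finset.mem_univ, true_and]
      refine ⟨hlt2, ?_⟩
      rw [hswsw, hswsw]; exact h2
    · intro p _; exact Prod.ext (hswsw p.1) (hswsw p.2)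
    · intro q _; exact Prod.ext (hswsw q.1) (hswsw q.2)
  have : S'.card < S.card := by
    rw [hcard]; exact Finset.card_erase_lt_of_mem hmem
  exact this

lemma invcD_swap_lt' {N : ℕ} {g : Equiv.Perm (Fin N)} {i j : Fin N} (hj : (j : ℕ) = (i : ℕ) + 1)
    (hlt : g j < g i) :
    invcD ((Equiv.swap i j).trans g) < invcD g := by
  classical
  set sw := Equiv.swap i j with hswdef
  have hswi : sw i = j := Equiv.swap_apply_left i j
  have hswj : sw j = i := Equiv.swap_apply_right i j
  have hswsw : ∀ x, sw (sw x) = x := fun x => Equiv.swap_apply_self i j x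
  have hij : i < j := by rw [Fin.lt_def]; omega
  set S := Finset.univ.filter (fun p : Fin N × Fin N => p.1 < p.2 ∧ g p.2 < g p.1) with hS
  set S' := Finset.univ.filter
    (fun p : Fin N × Fin N => p.1 < p.2 ∧ g (sw p.2) < g (sw p.1)) with hS'
  have hmem : (i, j) ∈ S := by simp [hS, hij, hlt]
  have hcard : S'.card = (S.erase (i, j)).card := by
    apply Finset.card_bij' (fun p _ => (sw p.1, sw p.2)) (fun q _ => (sw q.1, sw q.2))
    · intro p hp
      simp only [hS', Finset.mem_filter, Finset.mem_univ, true_and] at hp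
      obtain ⟨h1, h2⟩ := hp
      have hpne : ¬(p.1 = i ∧ p.2 = j) := by
        rintro ⟨e1, e2⟩; rw [e1, e2, hswi, hswj] at h2; exact absurd (lt_trans h2 hlt) (lt_irrefl _)
      have hlt2 := swap_adj_lt hj h1 hpne
      refine Finset.mem_erase.mpr ⟨?_, ?_⟩
      · intro he
        have e1 : sw p.1 = i := congrArg Prod.fst he
        have e2 : sw p.2 = j := congrArg Prod.snd he
        have f1 : p.1 = j := by rw [← hswsw p.1, e1, hswi]
        have f2 : p.2 = i := by rw [← hswsw p.2, e2, hswj]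
        rw [f1, f2] at h1; exact absurd h1 (not_lt.mpr (le_of_lt hij))
      · simp only [hS, Finset.mem_filter, Finset.mem_univ, true_and]
        exact ⟨hlt2, h2⟩
    · intro q hq
      obtain ⟨hqne, hq⟩ := Finset.mem_erase.mp hq
      simp only [hS, Finset.mem_filter, Finset.mem_univ, true_and] at hq
      obtain ⟨h1, h2⟩ := hq
      have hqne' : ¬(q.1 = i ∧ q.2 = j) := by
        rintro ⟨e1, e2⟩; exact hqne (Prod.ext e1 e2)
      have hlt2 := swap_adj_lt hj h1 hqne'
      simp only [hS', Finset.mem_filter, Finset.mem_univ, true_and]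
      refine ⟨hlt2, ?_⟩
      rw [hswsw, hswsw]; exact h2
    · intro p _; exact Prod.ext (hswsw p.1) (hswsw p.2)
    · intro q _; exact Prod.ext (hswsw q.1) (hswsw q.2)
  have : S'.card < S.card := by
    rw [hcard]; exact Finset.card_erase_lt_of_mem hmem
  exact this

lemma initseg_eq' {N : ℕ} {S T : Finset (Fin N)}
    (hS : ∀ i j : Fin N, i ≤ j → j ∈ S → i ∈ S)
    (hT : ∀ i j : Fin N, i ≤ j → j ∈ T → i ∈ T)
    (hc : S.card = T.card) : S = T := by
  have key : ∀ (S : Finset (Fin N)), (∀ i j : Fin N, i ≤ j → j ∈ S → i ∈ S) →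
      ∀ i : Fin N, i ∈ S ↔ (i : ℕ) < S.card := by
    intro S hS i
    constructor
    · intro hi
      have hsub : Finset.Iic i ⊆ S := fun j hj => hS j i (Finset.mem_Iic.mp hj) hi
      have h1 := Finset.card_le_card hsub
      rw [Fin.card_Iic] at h1
      omega
    · intro hi
      by_contra hni
      have hsub : S ⊆ Finset.Iio i := by
        intro j hjm
        rcases le_or_gt i j with h | h
        · exact absurd (hS i j h hjm) hni
        · exact Finset.mem_Iio.mpr h
      have h1 := Finset.card_le_card hsub
      rw [Fin.card_Iio] at h1
      omega
  ext i
  rw [key S hS i, key T hT i, hc]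

lemma dec_unique' {N : ℕ} {u v : Fin N → ℕ}
    (hu : ∀ i j : Fin N, i ≤ j → u j ≤ u i) (hv : ∀ i j : Fin N, i ≤ j → v j ≤ v i)
    (ρ : Equiv.Perm (Fin N)) (h : ∀ k, u k = v (ρ k)) : u = v := by
  classical
  have base : ∀ t : ℕ, (Finset.univ.filter fun i => t ≤ u i) =
      Finset.univ.filter fun i => t ≤ v i := by
    intro t
    apply initseg_eq'
    · intro a b hab hb
      simp only [Finset.mem_filter, Finset.mem_univ, true_and] at hb ⊢
      exact le_trans hb (hu a b hab)
    · intro a b hab hb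
      simp only [Finset.mem_filter, Finset.mem_univ, true_and] at hb ⊢
      exact le_trans hb (hv a b hab)
    · apply Finset.card_bij' (fun a _ => ρ a) (fun b _ => ρ.symm b)
      · intro a ha
        simp only [Finset.mem_filter, Finset.mem_univ, true_and] at ha ⊢
        rw [← h a]; exact ha
      · intro b hb
        simp only [Finset.mem_filter, Finset.mem_univ, true_and] at hb ⊢
        rw [h (ρ.symm b), Equiv.apply_symm_apply]; exact hb
      · intro a _; exact Equiv.symm_apply_apply ρ a
      · intro b _; exact Equiv.apply_symm_apply ρ b
  funext k
  have h1 : k ∈ Finset.univ.filter (fun i => u k ≤ u i) := by simp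
  rw [base (u k)] at h1
  simp only [Finset.mem_filter, Finset.mem_univ, true_and] at h1
  have h2 : k ∈ Finset.univ.filter (fun i => v k ≤ v i) := by simp
  rw [← base (v k)] at h2
  simp only [Finset.mem_filter, Finset.mem_univ, true_and] at h2
  omega

lemma perm_eq_one_of_no_descent' {N : ℕ} (g : Equiv.Perm (Fin N))
    (h : ∀ i j : Fin N, (j : ℕ) = (i : ℕ) + 1 → g i < g j) : g = 1 := by
  have mono : ∀ m : ℕ, ∀ i j : Fin N, (j : ℕ) = (i : ℕ) + m + 1 → g i < g j := by
    intro m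
    induction m with
    | zero => intro i j hj; exact h i j (by omega)
    | succ m ih =>
      intro i j hj
      have hlt : (i : ℕ) + m + 1 < N := by have := j.isLt; omega
      exact lt_trans (ih i ⟨(i:ℕ)+m+1, hlt⟩ rfl) (h ⟨(i:ℕ)+m+1, hlt⟩ j (by simp; omega))
  have smono : StrictMono g := by
    intro a b hab
    have hab' : (a : ℕ) < (b : ℕ) := hab
    exact mono ((b:ℕ) - (a:ℕ) - 1) a b (by omega)
  have hle : ∀ k : Fin N, (k : ℕ) ≤ (g k : ℕ) := by
    have : ∀ m : ℕ, ∀ k : Fin N, (k : ℕ) ≤ m → (k : ℕ) ≤ (g k : ℕ) := by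
      intro m
      induction m with
      | zero => intro k hk; omega
      | succ m ih =>
        intro k hk
        by_cases h0 : (k : ℕ) = 0
        · omega
        · have hlt : (k : ℕ) - 1 < N := by have := k.isLt; omega
          have h1 : g ⟨(k:ℕ)-1, hlt⟩ < g k := smono (by rw [Fin.lt_def]; simp; omega)
          have h2 := ih ⟨(k:ℕ)-1, hlt⟩ (by simp; omega)
          rw [Fin.lt_def] at h1
          simp only at h2
          omega
    exact fun k => this (k : ℕ) k le_rfl
  have hsur : ∀ k : Fin N, (g k : ℕ) ≤ (k : ℕ) := by
    intro k
    by_contra hc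
    push_neg at hc
    -- g k > k; consider g.symm
    have smono' : StrictMono g.symm := by
      intro a b hab
      rcases lt_trichotomy (g.symm a) (g.symm b) with h' | h' | h'
      · exact h'
      · exfalso; have : a = b := by
          have := congrArg g h'; simpa using this
        rw [this] at hab; exact lt_irrefl _ hab
      · exfalso
        have := smono h'
        rw [Equiv.apply_symm_apply, Equiv.apply_symm_apply] at this
        exact absurd hab (not_lt.mpr (le_of_lt this))
    have hle' : ∀ k : Fin N, (k : ℕ) ≤ (g.symm k : ℕ) := by
      have : ∀ m : ℕ, ∀ k : Fin N, (k : ℕ) ≤ m → (k : ℕ) ≤ (g.symm k : ℕ) := by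
        intro m
        induction m with
        | zero => intro k hk; omega
        | succ m ih =>
          intro k hk
          by_cases h0 : (k : ℕ) = 0
          · omega
          · have hlt : (k : ℕ) - 1 < N := by have := k.isLt; omega
            have h1 : g.symm ⟨(k:ℕ)-1, hlt⟩ < g.symm k := smono' (by rw [Fin.lt_def]; simp; omega)
            have h2 := ih ⟨(k:ℕ)-1, hlt⟩ (by simp; omega)
            rw [Fin.lt_def] at h1
            simp only at h2
            omega
      exact fun k => this (k : ℕ) k le_rfl
    have := hle' (g k)
    rw [Equiv.symm_apply_apply] at this
    omega
  ext k
  have := hle k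
  have := hsur k
  simp only [Equiv.Perm.coe_one, id_eq]
  omega
/-- value of `Tfill` at a box of the tableau -/
lemma Tfill_at {n : ℕ} {pos : Fin (n+1) → ℕ × ℕ} (hinj : Function.Injective pos)
    (w : Fin (n+1) → ℕ) (a : Fin (n+1)) : Tfill pos w (pos a) = w a := by
  unfold Tfill
  rw [Finset.sum_eq_single_of_mem a (Finset.mem_univ a)]
  · rw [if_pos rfl]
  · intro b _ hb
    rw [if_neg (fun h => hb (hinj h))]

/-- `Tfill` is invariant under swapping two entries with equal values -/
lemma Tfill_swap {n : ℕ} (τ : Fin (n+1) → ℕ × ℕ) (w : Fin (n+1) → ℕ)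
    (a b : Fin (n+1)) (hw : w a = w b) :
    Tfill (fun k => τ (Equiv.swap a b k)) w = Tfill τ w := by
  have hwsw : ∀ i, w (Equiv.swap a b i) = w i := by
    intro i
    rcases Equiv.swap_apply_def a b i with _
    by_cases hia : i = a
    · rw [hia, Equiv.swap_apply_left, hw]
    · by_cases hib : i = b
      · rw [hib, Equiv.swap_apply_right, hw]
      · rw [Equiv.swap_apply_of_ne_of_ne hia hib]
  funext bx
  unfold Tfill
  conv_rhs => rw [← Equiv.sum_comp (Equiv.swap a b) (fun i => if τ i = bx then w i else 0)]
  apply Finset.sum_congr rfl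
  intro i _
  by_cases h : τ (Equiv.swap a b i) = bx
  · rw [if_pos h, if_pos h, hwsw]
  · rw [if_neg h, if_neg h]

/-- if both a tableau and a swapped version are RSTs, then the two swapped
boxes lie in distinct rows and distinct columns -/
lemma rst_swap_ne {n : ℕ} {D : Finset (ℕ × ℕ)} {τ : Fin (n+1) → ℕ × ℕ}
    {a b : Fin (n+1)} (hab : a ≠ b)
    (h1 : IsRST n D τ) (h2 : IsRST n D (swapEntries τ a b)) :
    (τ a).1 ≠ (τ b).1 ∧ (τ a).2 ≠ (τ b).2 := by
  obtain ⟨inj1, _, _, hrow1, hcol1⟩ := h1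
  obtain ⟨_, _, _, hrow2, hcol2⟩ := h2
  have e1 : swapEntries τ a b a = τ b := by simp [swapEntries]
  have e2 : swapEntries τ a b b = τ a := by simp [swapEntries]
  have hne : τ a ≠ τ b := fun h => hab (inj1 h)
  constructor
  · intro hr
    have hcne : (τ a).2 ≠ (τ b).2 := fun hc => hne (Prod.ext hr hc)
    rcases lt_or_gt_of_ne hcne with h | h
    · have o1 : b < a := hrow1 a b hr h
      have o2 : a < b := hrow2 b a (by rw [e1, e2]; exact hr) (by rw [e1, e2]; exact h)
      exact absurd o2 (not_lt.mpr (le_of_lt o1))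
    · have o1 : a < b := hrow1 b a hr.symm h
      have o2 : b < a := hrow2 a b (by rw [e1, e2]; exact hr.symm) (by rw [e1, e2]; exact h)
      exact absurd o2 (not_lt.mpr (le_of_lt o1))
  · intro hc
    have hrne : (τ a).1 ≠ (τ b).1 := fun hr => hne (Prod.ext hr hc)
    rcases lt_or_gt_of_ne hrne with h | h
    · have o1 : b < a := hcol1 a b hc h
      have o2 : a < b := hcol2 b a (by rw [e1, e2]; exact hc) (by rw [e1, e2]; exact h)
      exact absurd o2 (not_lt.mpr (le_of_lt o1))
    · have o1 : a < b := hcol1 b a hc.symm h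
      have o2 : b < a := hcol2 a b (by rw [e1, e2]; exact hc.symm) (by rw [e1, e2]; exact h)
      exact absurd o2 (not_lt.mpr (le_of_lt o1))

/-- swapping two adjacent entries in distinct rows and columns keeps RST -/
lemma rst_swap_of {n : ℕ} {D : Finset (ℕ × ℕ)} {τ : Fin (n+1) → ℕ × ℕ}
    {i j : Fin (n+1)} (hj : (j : ℕ) = (i : ℕ) + 1)
    (h1 : IsRST n D τ) (hr : (τ i).1 ≠ (τ j).1) (hc : (τ i).2 ≠ (τ j).2) :
    IsRST n D (swapEntries τ i j) := by
  obtain ⟨inj, mem, surj, hrow, hcol⟩ := h1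
  have hswsw : ∀ x, Equiv.swap i j (Equiv.swap i j x) = x := Equiv.swap_apply_self i j
  refine ⟨inj.comp (Equiv.injective _), fun k => mem _, ?_, ?_, ?_⟩
  · intro b hb
    obtain ⟨k, hk⟩ := surj b hb
    exact ⟨Equiv.swap i j k, by unfold swapEntries; rw [hswsw]; exact hk⟩
  · intro x y hrow' hlt'
    have h5 := hrow (Equiv.swap i j x) (Equiv.swap i j y) hrow' hlt'
    by_contra hxy
    push_neg at hxy
    have hxyne : x ≠ y := by
      intro he; rw [he] at h5; exact lt_irrefl _ h5
    have hxy' : x < y := lt_of_le_of_ne hxy hxyne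
    by_cases hp : x = i ∧ y = j
    · obtain ⟨e1, e2⟩ := hp
      rw [e1, e2] at hrow'
      unfold swapEntries at hrow'
      rw [Equiv.swap_apply_left, Equiv.swap_apply_right] at hrow'
      exact hr hrow'.symm
    · exact absurd (swap_adj_lt hj hxy' hp) (not_lt.mpr (le_of_lt h5))
  · intro x y hcol' hlt'
    have h5 := hcol (Equiv.swap i j x) (Equiv.swap i j y) hcol' hlt'
    by_contra hxy
    push_neg at hxy
    have hxyne : x ≠ y := by
      intro he; rw [he] at h5; exact lt_irrefl _ h5
    have hxy' : x < y := lt_of_le_of_ne hxy hxyne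
    by_cases hp : x = i ∧ y = j
    · obtain ⟨e1, e2⟩ := hp
      rw [e1, e2] at hcol'
      unfold swapEntries at hcol'
      rw [Equiv.swap_apply_left, Equiv.swap_apply_right] at hcol'
      exact hc hcol'.symm
    · exact absurd (swap_adj_lt hj hxy' hp) (not_lt.mpr (le_of_lt h5))

/-- in a minimal decomposition, a jump swaps adjacent entries -/
lemma sigma_adj {n : ℕ} {v : Fin (n+1) → ℕ} {σ : Equiv.Perm (Fin (n+1))}
    (hdec : ∀ i j : Fin (n+1), σ i ≤ σ j → v j ≤ v i)
    (hmono : ∀ i j : Fin (n+1), i < j → v i = v j → σ i < σ j)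
    {i j : Fin (n+1)} (hj : (j : ℕ) = (i : ℕ) + 1) (heq : v i = v j) :
    (σ j : ℕ) = (σ i : ℕ) + 1 := by
  have hij : i < j := by rw [Fin.lt_def]; omega
  have hab : σ i < σ j := hmono i j hij heq
  rw [Fin.lt_def] at hab
  by_contra hne
  have hc : (σ i : ℕ) + 1 < (σ j : ℕ) := by omega
  have hcval : (σ i : ℕ) + 1 < n + 1 := lt_trans hc (σ j).isLt
  set c : Fin (n+1) := ⟨(σ i : ℕ) + 1, hcval⟩ with hcdef
  set k := σ.symm c with hkdef
  have hσk : σ k = c := Equiv.apply_symm_apply σ c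
  have h1 : σ i ≤ σ k := by rw [hσk, Fin.le_def]; simp [hcdef]
  have h2 : σ k ≤ σ j := by rw [hσk, Fin.le_def]; simp [hcdef]; omega
  have hv1 : v k ≤ v i := hdec i k h1
  have hv2 : v j ≤ v k := hdec k j h2
  have hvk : v k = v i := le_antisymm hv1 (by rw [← heq] at hv2; exact hv2)
  have hki : k ≠ i := by
    intro h
    rw [h] at hσk
    have : (σ i : ℕ) = (c : ℕ) := by rw [hσk]
    simp [hcdef] at this
  have hkj : k ≠ j := by
    intro h
    rw [h] at hσk
    have : (σ j : ℕ) = (c : ℕ) := by rw [hσk]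
    simp [hcdef] at this
    omega
  rcases lt_trichotomy k i with h | h | h
  · have := hmono k i h hvk
    rw [hσk, Fin.lt_def] at this
    simp [hcdef] at this
  · exact hki h
  · have hkj' : j < k := by
      rw [Fin.lt_def] at h ⊢
      have : (k : ℕ) ≠ (j : ℕ) := fun hh => hkj (Fin.ext hh)
      omega
    have := hmono j k hkj' (by rw [← heq, hvk])
    rw [hσk, Fin.lt_def] at this
    simp [hcdef] at this
    omega
/-- The invariant maintained along the Yang--Baxter graph. -/
structure YBInv {n : ℕ} (D : Finset (ℕ × ℕ)) (τ0 : Fin (n+1) → ℕ × ℕ)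
    (V : YBVertex n) : Prop where
  rst : IsRST n D V.1
  dec : ∀ i j : Fin (n+1), V.2.2.2 i ≤ V.2.2.2 j → V.2.2.1 j ≤ V.2.2.1 i
  mono : ∀ i j : Fin (n+1), i < j → V.2.2.1 i = V.2.2.1 j → V.2.2.2 i < V.2.2.2 j
  zeta : ∀ k, V.2.1 k = Polynomial.C (tabContent V.1 (V.2.2.2 k)) +
    Polynomial.C ((V.2.2.1 k : ℤ)) * Polynomial.X
  ord : ∃ π : Equiv.Perm (Fin (n+1)), (∀ a, V.1 a = τ0 (π a)) ∧
    ∀ a b : Fin (n+1), a < b → rigid (V.1 a) (V.1 b) → π a < π b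

lemma inv_root {n : ℕ} (D : Finset (ℕ × ℕ)) (τ0 : Fin (n+1) → ℕ × ℕ)
    (h0 : IsRST n D τ0) : YBInv D τ0 (rootVertex τ0) where
  rst := h0
  dec := fun i j _ => le_refl 0
  mono := fun i j hij _ => hij
  zeta := fun k => by simp [rootVertex]
  ord := ⟨1, fun a => rfl, fun a b h _ => h⟩

lemma rot_lt {n : ℕ} {k : Fin (n+1)} (h : (k : ℕ) + 1 < n + 1) :
    finRotate (n+1) k = ⟨(k : ℕ) + 1, h⟩ := by
  rw [finRotate_succ_apply]
  apply Fin.ext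
  rw [Fin.val_add_one]
  have : k ≠ Fin.last n := by
    intro he; rw [he] at h; simp at h
  rw [if_neg this]

lemma rot_last {n : ℕ} : finRotate (n+1) (Fin.last n) = 0 := by
  rw [finRotate_succ_apply]
  exact Fin.last_add_one n

lemma vPsi_lt {n : ℕ} (v : Fin (n+1) → ℕ) {k : Fin (n+1)} (h : (k : ℕ) + 1 < n + 1) :
    vPsi v k = v ⟨(k : ℕ) + 1, h⟩ := dif_pos h

lemma vPsi_last {n : ℕ} (v : Fin (n+1) → ℕ) : vPsi v (Fin.last n) = v 0 + 1 := by
  unfold vPsi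
  rw [dif_neg (by simp)]

lemma zetaPsi_lt {n : ℕ} (ζ : Fin (n+1) → Polynomial ℤ) {k : Fin (n+1)}
    (h : (k : ℕ) + 1 < n + 1) : zetaPsi ζ k = ζ ⟨(k : ℕ) + 1, h⟩ := dif_pos h

lemma zetaPsi_last {n : ℕ} (ζ : Fin (n+1) → Polynomial ℤ) :
    zetaPsi ζ (Fin.last n) = ζ 0 + Polynomial.X := by
  unfold zetaPsi
  rw [dif_neg (by simp)]

lemma inv_gstep {n : ℕ} {D : Finset (ℕ × ℕ)} {τ0 : Fin (n+1) → ℕ × ℕ}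
    {V W : YBVertex n} (h : GStep n D V W) (hI : YBInv D τ0 V) : YBInv D τ0 W := by
  cases h with
  | step τ ζ v σ i j hj hlt =>
    obtain ⟨rst, dec, mono, zeta, ord⟩ := hI
    dsimp only at rst dec mono zeta ord
    refine ⟨rst, ?_, ?_, ?_, ord⟩
    · intro x y hxy
      exact dec _ _ hxy
    · intro x y hxy heq
      dsimp only at heq ⊢
      by_cases hp : x = i ∧ y = j
      · obtain ⟨e1, e2⟩ := hp
        rw [e1, e2] at heq
        rw [Equiv.swap_apply_left, Equiv.swap_apply_right] at heq
        omega
      · exact mono _ _ (swap_adj_lt hj hxy hp) heq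
    · intro k
      exact zeta (Equiv.swap i j k)
  | jump τ ζ v σ i j hj heq hse hrst =>
    obtain ⟨rst, dec, mono, zeta, ord⟩ := hI
    dsimp only at rst dec mono zeta ord
    have hij : i < j := by rw [Fin.lt_def]; omega
    have hab : σ i < σ j := mono i j hij heq
    have hadj : (σ j : ℕ) = (σ i : ℕ) + 1 := sigma_adj dec mono hj heq
    have habne : σ i ≠ σ j := ne_of_lt hab
    have hdiff := rst_swap_ne habne rst hrst
    have hct : ctb (τ (σ j)) + 2 ≤ ctb (τ (σ i)) := hse
    have hnr : ¬ rigid (τ (σ i)) (τ (σ j)) := by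
      intro hr
      rcases hr with h | h | h
      · exact hdiff.1 h
      · exact hdiff.2 h
      · omega
    refine ⟨hrst, dec, mono, ?_, ?_⟩
    · intro k
      have hz := zeta (Equiv.swap i j k)
      dsimp only
      show ζ (Equiv.swap i j k) = _
      rw [hz]
      by_cases hki : k = i
      · rw [hki]
        rw [Equiv.swap_apply_left]
        have e1 : swapEntries τ (σ i) (σ j) (σ i) = τ (σ j) := by simp [swapEntries]
        rw [show tabContent (swapEntries τ (σ i) (σ j)) (σ i) = ctb (τ (σ j)) by
          rw [tabContent_eq_ctb, e1]]
        rw [tabContent_eq_ctb, heq]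
      · by_cases hkj : k = j
        · rw [hkj]
          rw [Equiv.swap_apply_right]
          have e2 : swapEntries τ (σ i) (σ j) (σ j) = τ (σ i) := by simp [swapEntries]
          rw [show tabContent (swapEntries τ (σ i) (σ j)) (σ j) = ctb (τ (σ i)) by
            rw [tabContent_eq_ctb, e2]]
          rw [tabContent_eq_ctb, heq]
        · rw [Equiv.swap_apply_of_ne_of_ne hki hkj]
          have hσk : σ k ≠ σ i ∧ σ k ≠ σ j :=
            ⟨fun hh => hki (σ.injective hh), fun hh => hkj (σ.injective hh)⟩
          have e3 : swapEntries τ (σ i) (σ j) (σ k) = τ (σ k) := by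
            unfold swapEntries
            rw [Equiv.swap_apply_of_ne_of_ne hσk.1 hσk.2]
          rw [show tabContent (swapEntries τ (σ i) (σ j)) (σ k) = ctb (τ (σ k)) by
            rw [tabContent_eq_ctb, e3]]
          rw [tabContent_eq_ctb]
    · obtain ⟨π, hπ, hord⟩ := ord
      refine ⟨(Equiv.swap (σ i) (σ j)).trans π, ?_, ?_⟩
      · intro a
        show τ (Equiv.swap (σ i) (σ j) a) = τ0 (π (Equiv.swap (σ i) (σ j) a))
        exact hπ _
      · intro x y hxy hrig
        dsimp only at hrig ⊢
        have exy : ∀ z, swapEntries τ (σ i) (σ j) z = τ (Equiv.swap (σ i) (σ j) z) :=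
          fun z => rfl
        simp only [Equiv.trans_apply]
        by_cases hxi : x = σ i
        · by_cases hyj : y = σ j
          · exfalso
            rw [hxi, hyj] at hrig
            rw [exy, exy, Equiv.swap_apply_left, Equiv.swap_apply_right] at hrig
            exact hnr (rigid_symm hrig)
          · by_cases hyi : y = σ i
            · rw [hxi] at hxy; rw [hyi] at hxy; exact absurd hxy (lt_irrefl _)
            · -- x = σ i, y ∉ {σi, σj} : y > σ i, y ≠ σ j so y > σ j
              have hy : Equiv.swap (σ i) (σ j) y = y := Equiv.swap_apply_of_ne_of_ne hyi hyj
              have hyb : σ j < y := by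
                rw [hxi, Fin.lt_def] at hxy
                rw [Fin.lt_def]
                have : (y : ℕ) ≠ (σ j : ℕ) := fun hh => hyj (Fin.ext hh)
                omega
              rw [hxi] at hrig ⊢
              rw [exy, exy, Equiv.swap_apply_left, hy] at hrig
              rw [Equiv.swap_apply_left, hy]
              exact hord _ _ hyb hrig
        · by_cases hxj : x = σ j
          · -- x = σ j, y > x, y ∉ {σi (since > x > σi), σj}
            have hyj : y ≠ σ j := by
              intro he; rw [hxj, he] at hxy; exact absurd hxy (lt_irrefl _)
            have hyi : y ≠ σ i := by
              intro he
              rw [hxj, he, Fin.lt_def] at hxy; omega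
            have hy : Equiv.swap (σ i) (σ j) y = y := Equiv.swap_apply_of_ne_of_ne hyi hyj
            have hya : σ i < y := by
              rw [hxj, Fin.lt_def] at hxy
              rw [Fin.lt_def]
              omega
            rw [hxj] at hrig ⊢
            rw [exy, exy, Equiv.swap_apply_right, hy] at hrig
            rw [Equiv.swap_apply_right, hy]
            exact hord _ _ hya hrig
          · have hx : Equiv.swap (σ i) (σ j) x = x := Equiv.swap_apply_of_ne_of_ne hxi hxj
            by_cases hyi : y = σ i
            · -- y = σ i, x < y = σ i < σ j
              have hxb : x < σ j := by
                rw [hyi, Fin.lt_def] at hxy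
                rw [Fin.lt_def]
                omega
              rw [hyi] at hrig ⊢
              rw [exy, exy, hx, Equiv.swap_apply_left] at hrig
              rw [Equiv.swap_apply_left, hx]
              exact hord _ _ hxb hrig
            · by_cases hyj : y = σ j
              · -- y = σ j, x < y, x ≠ σ i so x < σ i
                have hxa : x < σ i := by
                  rw [hyj, Fin.lt_def] at hxy
                  rw [Fin.lt_def]
                  have : (x : ℕ) ≠ (σ i : ℕ) := fun hh => hxi (Fin.ext hh)
                  omega
                rw [hyj] at hrig ⊢
                rw [exy, exy, hx, Equiv.swap_apply_right] at hrig
                rw [Equiv.swap_apply_right, hx]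
                exact hord _ _ hxa hrig
              · have hy : Equiv.swap (σ i) (σ j) y = y := Equiv.swap_apply_of_ne_of_ne hyi hyj
                rw [exy, exy, hx, hy] at hrig
                rw [hx, hy]
                exact hord _ _ hxy hrig
  | affine τ ζ v σ =>
    obtain ⟨rst, dec, mono, zeta, ord⟩ := hI
    dsimp only at rst dec mono zeta ord
    have hrotlt : ∀ {k : Fin (n+1)} (h : (k : ℕ) + 1 < n + 1),
        (σ * finRotate (n+1)) k = σ ⟨(k : ℕ) + 1, h⟩ := by
      intro k h
      show σ (finRotate (n+1) k) = _
      rw [rot_lt h]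
    have hrotlast : (σ * finRotate (n+1)) (Fin.last n) = σ 0 := by
      show σ (finRotate (n+1) (Fin.last n)) = _
      rw [rot_last]
    refine ⟨rst, ?_, ?_, ?_, ord⟩
    · -- dec
      intro x y hxy
      dsimp only at hxy ⊢
      by_cases hx : (x : ℕ) + 1 < n + 1
      · by_cases hy : (y : ℕ) + 1 < n + 1
        · rw [hrotlt hx, hrotlt hy] at hxy
          show vPsi v y ≤ vPsi v x
          rw [vPsi_lt v hx, vPsi_lt v hy]
          exact dec _ _ hxy
        · have hy' : y = Fin.last n := by
            apply Fin.ext; have := y.isLt; simp [Fin.last]; omega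
          rw [hy'] at hxy ⊢
          rw [hrotlt hx, hrotlast] at hxy
          show vPsi v (Fin.last n) ≤ vPsi v x
          rw [vPsi_lt v hx, vPsi_last]
          -- σ ⟨x+1⟩ ≤ σ 0 → v 0 + 1 ≤ v ⟨x+1⟩
          have hne : σ ⟨(x : ℕ) + 1, hx⟩ ≠ σ 0 := by
            intro he
            have := σ.injective he
            apply_fun (fun z : Fin (n+1) => (z : ℕ)) at this
            simp at this
          have hle := dec _ _ hxy
          rcases eq_or_lt_of_le hle with he | hlt2
          · exfalso
            have := mono 0 ⟨(x : ℕ) + 1, hx⟩ (by rw [Fin.lt_def]; simp) he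
            rw [Fin.lt_def] at this
            rw [Fin.le_def] at hxy
            omega
          · omega
      · have hx' : x = Fin.last n := by
          apply Fin.ext; have := x.isLt; simp [Fin.last]; omega
        by_cases hy : (y : ℕ) + 1 < n + 1
        · rw [hx'] at hxy ⊢
          rw [hrotlast, hrotlt hy] at hxy
          show vPsi v y ≤ vPsi v (Fin.last n)
          rw [vPsi_lt v hy, vPsi_last]
          have := dec _ _ hxy
          omega
        · have hy' : y = Fin.last n := by
            apply Fin.ext; have := y.isLt; simp [Fin.last]; omega
          rw [hx', hy']
    · -- mono
      intro x y hxy heq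
      dsimp only at heq ⊢
      have hx : (x : ℕ) + 1 < n + 1 := by
        rw [Fin.lt_def] at hxy
        have := y.isLt
        omega
      by_cases hy : (y : ℕ) + 1 < n + 1
      · rw [vPsi_lt v hx, vPsi_lt v hy] at heq
        rw [hrotlt hx, hrotlt hy]
        exact mono _ _ (by rw [Fin.lt_def]; simp; rw [Fin.lt_def] at hxy; omega) heq
      · have hy' : y = Fin.last n := by
          apply Fin.ext; have := y.isLt; simp [Fin.last]; omega
        rw [hy'] at heq ⊢
        rw [vPsi_lt v hx, vPsi_last] at heq
        rw [hrotlt hx, hrotlast]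
        rcases lt_trichotomy (σ ⟨(x : ℕ) + 1, hx⟩) (σ 0) with h | h | h
        · exact h
        · exfalso
          have := σ.injective h
          apply_fun (fun z : Fin (n+1) => (z : ℕ)) at this
          simp at this
        · exfalso
          have := dec 0 ⟨(x : ℕ) + 1, hx⟩ (le_of_lt h)
          omega
    · -- zeta
      intro k
      dsimp only
      by_cases hk : (k : ℕ) + 1 < n + 1
      · show zetaPsi ζ k = _
        rw [zetaPsi_lt ζ hk, zeta ⟨(k : ℕ) + 1, hk⟩]
        rw [hrotlt hk, vPsi_lt v hk]
      · have hk' : k = Fin.last n := by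
          apply Fin.ext; have := k.isLt; simp [Fin.last]; omega
        rw [hk']
        show zetaPsi ζ (Fin.last n) = _
        rw [zetaPsi_last, zeta 0, hrotlast, vPsi_last]
        rw [show ((v 0 + 1 : ℕ) : ℤ) = (v 0 : ℤ) + 1 by push_cast; ring]
        rw [map_add, map_one, add_mul, one_mul, add_assoc]
/-- canonical (sorted) vertex attached to a tableau and a decreasing weight -/
noncomputable def canonV {n : ℕ} (τ : Fin (n+1) → ℕ × ℕ) (w : Fin (n+1) → ℕ) :
    YBVertex n :=
  (τ, fun k => Polynomial.C (ctb (τ k)) + Polynomial.C ((w k : ℤ)) * Polynomial.X,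
    w, 1)

/-- at a sorted vertex the invariant forces the canonical form -/
lemma sorted_eq_canon {n : ℕ} {D : Finset (ℕ × ℕ)} {τ0 : Fin (n+1) → ℕ × ℕ}
    {V : YBVertex n} (hI : YBInv D τ0 V)
    (hsort : ∀ i j : Fin (n+1), i ≤ j → V.2.2.1 j ≤ V.2.2.1 i) :
    V = canonV V.1 V.2.2.1 := by
  obtain ⟨τ, ζ, v, σ⟩ := V
  obtain ⟨rst, dec, mono, zeta, ord⟩ := hI
  dsimp only at rst dec mono zeta ord hsort ⊢
  have huv : (fun k => v (σ⁻¹ k)) = v := by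
    apply dec_unique' (v := v) (ρ := σ⁻¹)
    · intro i j hij
      apply dec
      rw [Equiv.Perm.inv_def, Equiv.apply_symm_apply, Equiv.apply_symm_apply]
      exact hij
    · exact hsort
    · intro k; rfl
  have hvinv : ∀ k, v (σ⁻¹ k) = v k := fun k => congrFun huv k
  have hσ1 : ∀ k : Fin (n+1), σ k = k := by
    have key : ∀ m : ℕ, ∀ k : Fin (n+1), (k : ℕ) = m → σ k = k := by
      intro m
      induction m using Nat.strong_induction_on with
      | _ m IH =>
        intro k hk
        by_contra hne
        have hge1 : (k : ℕ) ≤ (σ k : ℕ) := by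
          by_contra hc
          push_neg at hc
          have h1 := IH (σ k : ℕ) (by omega) (σ k) rfl
          have h2 : σ k = k := σ.injective h1
          rw [h2] at hc
          omega
        have hge2 : (k : ℕ) ≤ (σ.symm k : ℕ) := by
          by_contra hc
          push_neg at hc
          have h1 := IH (σ.symm k : ℕ) (by omega) (σ.symm k) rfl
          have h2 : σ.symm k = k := by
            rw [Equiv.apply_symm_apply] at h1
            exact h1.symm
          rw [h2] at hc
          omega
        have hne2 : σ.symm k ≠ k := by
          intro he
          apply hne
          have := congrArg σ he
          rw [Equiv.apply_symm_apply] at this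
          exact this.symm
        have h2 : k < σ.symm k := by
          rw [Fin.lt_def]
          have : (σ.symm k : ℕ) ≠ (k : ℕ) := fun hh => hne2 (Fin.ext hh)
          omega
        have h3 : v k = v (σ.symm k) := (hvinv k).symm
        have h4 := mono k (σ.symm k) h2 h3
        rw [Equiv.apply_symm_apply] at h4
        rw [Fin.lt_def] at h4
        omega
    exact fun k => key (k : ℕ) k rfl
  have hσe : σ = 1 := Equiv.ext hσ1
  subst hσe
  have hz : ζ = fun k => Polynomial.C (ctb (τ k)) + Polynomial.C ((v k : ℤ)) * Polynomial.X := by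
    funext k
    rw [zeta k]
    rfl
  rw [hz]
  rfl

/-- every invariant vertex is H-connected (by forward steps) to its canonical
sorted vertex -/
lemma sort_conn {n : ℕ} {D : Finset (ℕ × ℕ)} {τ0 : Fin (n+1) → ℕ × ℕ} :
    ∀ (m : ℕ) (V : YBVertex n), YBInv D τ0 V → invcA V.2.2.1 ≤ m →
    Relation.ReflTransGen (HStep n D) V
      (canonV V.1 (fun k => V.2.2.1 ((V.2.2.2)⁻¹ k))) := by
  intro m
  induction m with
  | zero =>
    intro V hI hm
    -- no ascents possible? show sorted directly
    by_cases hd : ∃ p : Fin (n+1) × Fin (n+1), ((p.2 : ℕ) = (p.1 : ℕ) + 1) ∧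
        V.2.2.1 p.1 < V.2.2.1 p.2
    · exfalso
      obtain ⟨p, hp1, hp2⟩ := hd
      have hmem : p ∈ Finset.univ.filter
          (fun q : Fin (n+1) × Fin (n+1) => q.1 < q.2 ∧ V.2.2.1 q.1 < V.2.2.1 q.2) := by
        simp only [Finset.mem_filter, Finset.mem_univ, true_and]
        exact ⟨by rw [Fin.lt_def]; omega, hp2⟩
      have : 0 < invcA V.2.2.1 := Finset.card_pos.mpr ⟨p, hmem⟩
      omega
    · push_neg at hd
      have hsort : ∀ i j : Fin (n+1), i ≤ j → V.2.2.1 j ≤ V.2.2.1 i := by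
        have gap : ∀ (d : ℕ) (i j : Fin (n+1)), (j : ℕ) = (i : ℕ) + d →
            V.2.2.1 j ≤ V.2.2.1 i := by
          intro d
          induction d with
          | zero =>
            intro i j hij
            have : j = i := Fin.ext (by omega)
            rw [this]
          | succ d ih =>
            intro i j hij
            have hlt : (i : ℕ) + d < n + 1 := by have := j.isLt; omega
            have h1 := ih i ⟨(i : ℕ) + d, hlt⟩ rfl
            have h2 := hd (⟨(i : ℕ) + d, hlt⟩, j) (by simp; omega)
            simp only [not_lt] at h2
            exact le_trans h2 h1
        intro i j hij
        exact gap ((j : ℕ) - (i : ℕ)) i j (by rw [Fin.le_def] at hij; omega)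
      have hc := sorted_eq_canon hI hsort
      have hww : (fun k => V.2.2.1 ((V.2.2.2)⁻¹ k)) = V.2.2.1 := by
        obtain ⟨τ, ζ, v, σ⟩ := V
        have := congrArg (fun X : YBVertex n => X.2.2.2) hc
        dsimp only [canonV] at this ⊢
        rw [this]
        simp
      rw [hww, ← hc]
  | succ m ih =>
    intro V hI hm
    by_cases hd : ∃ p : Fin (n+1) × Fin (n+1), ((p.2 : ℕ) = (p.1 : ℕ) + 1) ∧
        V.2.2.1 p.1 < V.2.2.1 p.2
    · obtain ⟨⟨i, j⟩, hp1, hp2⟩ := hd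
      obtain ⟨τ, ζ, v, σ⟩ := V
      dsimp only at hp1 hp2 hm ⊢
      have hedge : HStep n D (τ, ζ, v, σ)
          (τ, fun k => ζ (Equiv.swap i j k), fun k => v (Equiv.swap i j k),
            σ * Equiv.swap i j) := HStep.step τ ζ v σ i j hp1 hp2
      have hG : GStep n D (τ, ζ, v, σ)
          (τ, fun k => ζ (Equiv.swap i j k), fun k => v (Equiv.swap i j k),
            σ * Equiv.swap i j) := GStep.step τ ζ v σ i j hp1 hp2
      have hI2 := inv_gstep hG hI
      have hmm : invcA (fun k => v (Equiv.swap i j k)) ≤ m := by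
        have := invcA_swap_lt' (v := v) hp1 hp2
        omega
      have htail := ih _ hI2 hmm
      have heq : (fun k => (fun k' => v (Equiv.swap i j k')) ((σ * Equiv.swap i j)⁻¹ k))
          = (fun k => v (σ⁻¹ k)) := by
        funext k
        have : (σ * Equiv.swap i j)⁻¹ k = Equiv.swap i j (σ⁻¹ k) := by
          rw [mul_inv_rev]
          rw [Equiv.Perm.mul_apply]
          congr 1
        rw [this]
        simp only []
        rw [Equiv.swap_apply_self]
      rw [heq] at htail
      exact Relation.ReflTransGen.head hedge htail
    · -- sorted already; same as zero case
      push_neg at hd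
      have hsort : ∀ i j : Fin (n+1), i ≤ j → V.2.2.1 j ≤ V.2.2.1 i := by
        have gap : ∀ (d : ℕ) (i j : Fin (n+1)), (j : ℕ) = (i : ℕ) + d →
            V.2.2.1 j ≤ V.2.2.1 i := by
          intro d
          induction d with
          | zero =>
            intro i j hij
            have : j = i := Fin.ext (by omega)
            rw [this]
          | succ d ih2 =>
            intro i j hij
            have hlt : (i : ℕ) + d < n + 1 := by have := j.isLt; omega
            have h1 := ih2 i ⟨(i : ℕ) + d, hlt⟩ rfl
            have h2 := hd (⟨(i : ℕ) + d, hlt⟩, j) (by simp; omega)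
            simp only [not_lt] at h2
            exact le_trans h2 h1
        intro i j hij
        exact gap ((j : ℕ) - (i : ℕ)) i j (by rw [Fin.le_def] at hij; omega)
      have hc := sorted_eq_canon hI hsort
      have hww : (fun k => V.2.2.1 ((V.2.2.2)⁻¹ k)) = V.2.2.1 := by
        obtain ⟨τ, ζ, v, σ⟩ := V
        have := congrArg (fun X : YBVertex n => X.2.2.2) hc
        dsimp only [canonV] at this ⊢
        rw [this]
        simp
      rw [hww, ← hc]
/-- a legal jump move connects the two canonical vertices (in one of the two
directions) -/
lemma jump_conn {n : ℕ} {D : Finset (ℕ × ℕ)} (τ : Fin (n+1) → ℕ × ℕ)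
    (w : Fin (n+1) → ℕ) (i j : Fin (n+1)) (hj : (j : ℕ) = (i : ℕ) + 1)
    (hw : w i = w j) (hct2 : 2 ≤ ((ctb (τ i)) - (ctb (τ j))).natAbs)
    (h1 : IsRST n D τ) (h2 : IsRST n D (swapEntries τ i j)) :
    Relation.ReflTransGen (fun a b => HStep n D a b ∨ HStep n D b a)
      (canonV τ w) (canonV (swapEntries τ i j) w) := by
  have hwsw : ∀ k, w (Equiv.swap i j k) = w k := by
    intro k
    by_cases hki : k = i
    · rw [hki, Equiv.swap_apply_left, hw]
    · by_cases hkj : k = j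
      · rw [hkj, Equiv.swap_apply_right, hw]
      · rw [Equiv.swap_apply_of_ne_of_ne hki hkj]
  have hswsw : ∀ x, Equiv.swap i j (Equiv.swap i j x) = x := Equiv.swap_apply_self i j
  rcases (by omega : ctb (τ j) + 2 ≤ ctb (τ i) ∨ ctb (τ i) + 2 ≤ ctb (τ j)) with hdir | hdir
  · -- forward jump from canonV τ w
    have he := HStep.jump (n := n) (D := D) τ
      (fun k => Polynomial.C (ctb (τ k)) + Polynomial.C ((w k : ℤ)) * Polynomial.X)
      w 1 i j hj hw hdir h2
    have etup : ((swapEntries τ ((1 : Equiv.Perm (Fin (n+1))) i) ((1 : Equiv.Perm (Fin (n+1))) j),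
        fun k => (fun k' => Polynomial.C (ctb (τ k')) + Polynomial.C ((w k' : ℤ)) * Polynomial.X)
          (Equiv.swap i j k), w, (1 : Equiv.Perm (Fin (n+1)))) : YBVertex n)
        = canonV (swapEntries τ i j) w := by
      unfold canonV
      refine Prod.ext rfl (Prod.ext ?_ rfl)
      funext k
      show Polynomial.C (ctb (τ (Equiv.swap i j k))) + Polynomial.C ((w (Equiv.swap i j k) : ℤ)) * Polynomial.X = _
      rw [hwsw k]
      rfl
    rw [etup] at he
    exact Relation.ReflTransGen.single (Or.inl he)
  · -- backward jump from canonV (swapEntries τ i j) w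
    have he := HStep.jump (n := n) (D := D) (swapEntries τ i j)
      (fun k => Polynomial.C (ctb (swapEntries τ i j k)) + Polynomial.C ((w k : ℤ)) * Polynomial.X)
      w 1 i j hj hw
      (by
        show ctb (swapEntries τ i j j) + 2 ≤ ctb (swapEntries τ i j i)
        unfold swapEntries
        rw [Equiv.swap_apply_left, Equiv.swap_apply_right]
        exact hdir)
      (by
        have : swapEntries (swapEntries τ i j) ((1 : Equiv.Perm (Fin (n+1))) i)
            ((1 : Equiv.Perm (Fin (n+1))) j) = τ := by
          funext k
          show τ (Equiv.swap i j (Equiv.swap i j k)) = τ k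
          rw [hswsw]
        rw [this]
        exact h1)
    have etup : ((swapEntries (swapEntries τ i j) ((1 : Equiv.Perm (Fin (n+1))) i)
          ((1 : Equiv.Perm (Fin (n+1))) j),
        fun k => (fun k' => Polynomial.C (ctb (swapEntries τ i j k')) +
          Polynomial.C ((w k' : ℤ)) * Polynomial.X) (Equiv.swap i j k), w,
        (1 : Equiv.Perm (Fin (n+1)))) : YBVertex n) = canonV τ w := by
      unfold canonV
      refine Prod.ext ?_ (Prod.ext ?_ rfl)
      · funext k
        show τ (Equiv.swap i j (Equiv.swap i j k)) = τ k
        rw [hswsw]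
      · funext k
        show Polynomial.C (ctb (τ (Equiv.swap i j (Equiv.swap i j k)))) +
          Polynomial.C ((w (Equiv.swap i j k) : ℤ)) * Polynomial.X = _
        rw [hswsw, hwsw k]
    rw [etup] at he
    exact Relation.ReflTransGen.single (Or.inr he)

/-- bubbling: two RSTs with the same filling and coherent rigid orders are
connected through canonical vertices -/
lemma bubble {n : ℕ} {D : Finset (ℕ × ℕ)} (w : Fin (n+1) → ℕ)
    (hdec : ∀ i j : Fin (n+1), i ≤ j → w j ≤ w i)
    (τ2 : Fin (n+1) → ℕ × ℕ) :
    ∀ (m : ℕ) (τ1 : Fin (n+1) → ℕ × ℕ) (g : Equiv.Perm (Fin (n+1))),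
    (∀ a, τ1 a = τ2 (g a)) → IsRST n D τ1 →
    (∀ a, w a = w (g a)) →
    (∀ a b : Fin (n+1), a < b → rigid (τ1 a) (τ1 b) → g a < g b) →
    invcD g ≤ m →
    Relation.ReflTransGen (fun a b => HStep n D a b ∨ HStep n D b a)
      (canonV τ1 w) (canonV τ2 w) := by
  intro m
  induction m with
  | zero =>
    intro τ1 g hg h1 hwg hrig hm
    by_cases hd : ∃ p : Fin (n+1) × Fin (n+1), ((p.2 : ℕ) = (p.1 : ℕ) + 1) ∧ g p.2 < g p.1
    · exfalso
      obtain ⟨p, hp1, hp2⟩ := hd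
      have hmem : p ∈ Finset.univ.filter
          (fun q : Fin (n+1) × Fin (n+1) => q.1 < q.2 ∧ g q.2 < g q.1) := by
        simp only [Finset.mem_filter, Finset.mem_univ, true_and]
        exact ⟨by rw [Fin.lt_def]; omega, hp2⟩
      have : 0 < invcD g := Finset.card_pos.mpr ⟨p, hmem⟩
      omega
    · push_neg at hd
      have hg1 : g = 1 := by
        apply perm_eq_one_of_no_descent'
        intro i j hj
        have h2 := hd (i, j) hj
        have hne : g i ≠ g j := fun hh => (by
          have := g.injective hh
          rw [this] at hj
          omega : False)
        rcases lt_trichotomy (g i) (g j) with h | h | h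
        · exact h
        · exact absurd h hne
        · exact absurd h (by simpa using h2)
      have : τ1 = τ2 := by
        funext a
        rw [hg a, hg1]
        rfl
      rw [this]
  | succ m ih =>
    intro τ1 g hg h1 hwg hrig hm
    by_cases hd : ∃ p : Fin (n+1) × Fin (n+1), ((p.2 : ℕ) = (p.1 : ℕ) + 1) ∧ g p.2 < g p.1
    · obtain ⟨⟨i, j⟩, hp1, hp2⟩ := hd
      dsimp only at hp1 hp2
      have hij : i < j := by rw [Fin.lt_def]; omega
      -- equal weights at i and j
      have hww : w i = w j := by
        have e1 := hwg i
        have e2 := hwg j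
        have e3 : w (g i) ≤ w (g j) := hdec (g j) (g i) (le_of_lt hp2)
        have e4 : w j ≤ w i := hdec i j (le_of_lt hij)
        omega
      -- the swapped pair is not rigid
      have hnr : ¬ rigid (τ1 i) (τ1 j) := by
        intro hr
        have := hrig i j hij hr
        exact absurd this (not_lt.mpr (le_of_lt hp2))
      have hrow : (τ1 i).1 ≠ (τ1 j).1 := fun h => hnr (Or.inl h)
      have hcol : (τ1 i).2 ≠ (τ1 j).2 := fun h => hnr (Or.inr (Or.inl h))
      have hct : 2 ≤ ((ctb (τ1 i)) - (ctb (τ1 j))).natAbs := by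
        by_contra hcc
        push_neg at hcc
        exact hnr (Or.inr (Or.inr (by omega)))
      have hrst' : IsRST n D (swapEntries τ1 i j) := rst_swap_of hp1 h1 hrow hcol
      have step1 := jump_conn (D := D) τ1 w i j hp1 hww hct h1 hrst'
      -- recurse
      set g' : Equiv.Perm (Fin (n+1)) := (Equiv.swap i j).trans g with hg'def
      have hg'app : ∀ a, g' a = g (Equiv.swap i j a) := fun a => rfl
      have hswsw : ∀ x, Equiv.swap i j (Equiv.swap i j x) = x := Equiv.swap_apply_self i j
      have hwsw : ∀ k, w (Equiv.swap i j k) = w k := by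
        intro k
        by_cases hki : k = i
        · rw [hki, Equiv.swap_apply_left, hww]
        · by_cases hkj : k = j
          · rw [hkj, Equiv.swap_apply_right, hww]
          · rw [Equiv.swap_apply_of_ne_of_ne hki hkj]
      have hg2 : ∀ a, swapEntries τ1 i j a = τ2 (g' a) := by
        intro a
        unfold swapEntries
        rw [hg (Equiv.swap i j a), hg'app]
      have hwg2 : ∀ a, w a = w (g' a) := by
        intro a
        rw [hg'app, ← hwg (Equiv.swap i j a), hwsw]
      have hrig2 : ∀ a b : Fin (n+1), a < b → rigid (swapEntries τ1 i j a) (swapEntries τ1 i j b) →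
          g' a < g' b := by
        intro x y hxy hr
        have exy : ∀ z, swapEntries τ1 i j z = τ1 (Equiv.swap i j z) := fun z => rfl
        rw [hg'app, hg'app]
        by_cases hxi : x = i
        · by_cases hyj : y = j
          · exfalso
            rw [hxi, hyj, exy, exy, Equiv.swap_apply_left, Equiv.swap_apply_right] at hr
            exact hnr (rigid_symm hr)
          · by_cases hyi : y = i
            · rw [hxi] at hxy; rw [hyi] at hxy; exact absurd hxy (lt_irrefl _)
            · have hy : Equiv.swap i j y = y := Equiv.swap_apply_of_ne_of_ne hyi hyj
              have hyb : j < y := by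
                rw [hxi, Fin.lt_def] at hxy
                rw [Fin.lt_def]
                have : (y : ℕ) ≠ (j : ℕ) := fun hh => hyj (Fin.ext hh)
                omega
              rw [hxi, exy, exy, Equiv.swap_apply_left, hy] at hr
              rw [hxi, Equiv.swap_apply_left, hy]
              exact hrig _ _ hyb hr
        · by_cases hxj : x = j
          · have hyj : y ≠ j := by
              intro he; rw [hxj, he] at hxy; exact absurd hxy (lt_irrefl _)
            have hyi : y ≠ i := by
              intro he
              rw [hxj, he, Fin.lt_def] at hxy; omega
            have hy : Equiv.swap i j y = y := Equiv.swap_apply_of_ne_of_ne hyi hyj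
            have hya : i < y := by
              rw [hxj, Fin.lt_def] at hxy
              rw [Fin.lt_def]
              omega
            rw [hxj, exy, exy, Equiv.swap_apply_right, hy] at hr
            rw [hxj, Equiv.swap_apply_right, hy]
            exact hrig _ _ hya hr
          · have hx : Equiv.swap i j x = x := Equiv.swap_apply_of_ne_of_ne hxi hxj
            by_cases hyi : y = i
            · have hxb : x < j := by
                rw [hyi, Fin.lt_def] at hxy
                rw [Fin.lt_def]
                omega
              rw [hyi, exy, exy, hx, Equiv.swap_apply_left] at hr
              rw [hyi, Equiv.swap_apply_left, hx]
              exact hrig _ _ hxb hr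
            · by_cases hyj : y = j
              · have hxa : x < i := by
                  rw [hyj, Fin.lt_def] at hxy
                  rw [Fin.lt_def]
                  have : (x : ℕ) ≠ (i : ℕ) := fun hh => hxi (Fin.ext hh)
                  omega
                rw [hyj, exy, exy, hx, Equiv.swap_apply_right] at hr
                rw [hyj, Equiv.swap_apply_right, hx]
                exact hrig _ _ hxa hr
              · have hy : Equiv.swap i j y = y := Equiv.swap_apply_of_ne_of_ne hyi hyj
                rw [exy, exy, hx, hy] at hr
                rw [hx, hy]
                exact hrig _ _ hxy hr
      have hm2 : invcD g' ≤ m := by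
        have := invcD_swap_lt' (g := g) hp1 hp2
        rw [← hg'def] at this
        omega
      have step2 := ih (swapEntries τ1 i j) g' hg2 hrst' hwg2 hrig2 hm2
      exact Relation.ReflTransGen.trans step1 step2
    · -- no descent: as in base case
      push_neg at hd
      have hg1 : g = 1 := by
        apply perm_eq_one_of_no_descent'
        intro i j hj
        have h2 := hd (i, j) hj
        have hne : g i ≠ g j := fun hh => (by
          have := g.injective hh
          rw [this] at hj
          omega : False)
        rcases lt_trichotomy (g i) (g j) with h | h | h
        · exact h
        · exact absurd h hne
        · exact absurd h (by simpa using h2)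
      have : τ1 = τ2 := by
        funext a
        rw [hg a, hg1]
        rfl
      rw [this]
lemma inv_of_reach {n : ℕ} {D : Finset (ℕ × ℕ)} {τ0 : Fin (n+1) → ℕ × ℕ}
    (h0 : IsRST n D τ0) {V : YBVertex n}
    (h : Relation.ReflTransGen (GStep n D) (rootVertex τ0) V) : YBInv D τ0 V := by
  induction h with
  | refl => exact inv_root D τ0 h0
  | tail _ he ih => exact inv_gstep he ih

lemma tfill_edge {n : ℕ} {D : Finset (ℕ × ℕ)} {a b : YBVertex n}
    (h : HStep n D a b) :
    Tfill a.1 (fun k => a.2.2.1 ((a.2.2.2)⁻¹ k)) =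
      Tfill b.1 (fun k => b.2.2.1 ((b.2.2.2)⁻¹ k)) := by
  cases h with
  | step τ ζ v σ i j hj hlt =>
    dsimp only
    refine congrArg (Tfill τ) ?_
    funext k
    have hinv : (σ * Equiv.swap i j)⁻¹ k = Equiv.swap i j (σ⁻¹ k) := by
      rw [mul_inv_rev, Equiv.Perm.mul_apply]
      congr 1
    show v (σ⁻¹ k) = v (Equiv.swap i j ((σ * Equiv.swap i j)⁻¹ k))
    rw [hinv, Equiv.swap_apply_self]
  | jump τ ζ v σ i j hj heq hse hrst =>
    dsimp only
    have hw : v (σ⁻¹ (σ i)) = v (σ⁻¹ (σ j)) := by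
      rw [Equiv.Perm.inv_def, Equiv.symm_apply_apply, Equiv.symm_apply_apply]
      exact heq
    exact (Tfill_swap τ (fun k => v (σ⁻¹ k)) (σ i) (σ j) hw).symm

lemma tfill_conn {n : ℕ} {D : Finset (ℕ × ℕ)} {a b : YBVertex n}
    (h : Relation.ReflTransGen (fun x y => HStep n D x y ∨ HStep n D y x) a b) :
    Tfill a.1 (fun k => a.2.2.1 ((a.2.2.2)⁻¹ k)) =
      Tfill b.1 (fun k => b.2.2.1 ((b.2.2.2)⁻¹ k)) := by
  induction h with
  | refl => rfl
  | tail _ he ih =>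
    rcases he with he | he
    · exact ih.trans (tfill_edge he)
    · exact ih.trans (tfill_edge he).symm

lemma wv_eq {n : ℕ} {D : Finset (ℕ × ℕ)} {τ0 : Fin (n+1) → ℕ × ℕ} {V : YBVertex n}
    (hI : YBInv D τ0 V) {w : Fin (n+1) → ℕ}
    (hdec : ∀ i j : Fin (n+1), i ≤ j → w j ≤ w i)
    (horb : ∃ π : Equiv.Perm (Fin (n+1)), V.2.2.1 = fun k => w (π k)) :
    (fun k => V.2.2.1 ((V.2.2.2)⁻¹ k)) = w := by
  obtain ⟨π, hπ⟩ := horb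
  apply dec_unique' (ρ := (V.2.2.2)⁻¹.trans π)
  · intro i j hij
    apply hI.dec
    rw [Equiv.Perm.inv_def, Equiv.apply_symm_apply, Equiv.apply_symm_apply]
    exact hij
  · exact hdec
  · intro k
    exact congrFun hπ ((V.2.2.2)⁻¹ k)

theorem HStep_connected_iff_Tfill_eq' {n : ℕ} (D : Finset (ℕ × ℕ))
    (τ0 : Fin (n + 1) → ℕ × ℕ) (h0 : IsRST n D τ0)
    (V1 V2 : YBVertex n)
    (h1 : Relation.ReflTransGen (GStep n D) (rootVertex τ0) V1)
    (h2 : Relation.ReflTransGen (GStep n D) (rootVertex τ0) V2)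
    (w1 w2 : Fin (n + 1) → ℕ)
    (hdec1 : ∀ i j : Fin (n + 1), i ≤ j → w1 j ≤ w1 i)
    (horb1 : ∃ π : Equiv.Perm (Fin (n + 1)), V1.2.2.1 = fun k => w1 (π k))
    (hdec2 : ∀ i j : Fin (n + 1), i ≤ j → w2 j ≤ w2 i)
    (horb2 : ∃ π : Equiv.Perm (Fin (n + 1)), V2.2.2.1 = fun k => w2 (π k)) :
    Relation.ReflTransGen (fun a b => HStep n D a b ∨ HStep n D b a) V1 V2 ↔
      Tfill V1.1 w1 = Tfill V2.1 w2 := by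
  have hI1 := inv_of_reach h0 h1
  have hI2 := inv_of_reach h0 h2
  have hw1 := wv_eq hI1 hdec1 horb1
  have hw2 := wv_eq hI2 hdec2 horb2
  constructor
  · intro hconn
    have := tfill_conn hconn
    rw [hw1, hw2] at this
    exact this
  · intro hT
    obtain ⟨inj1, mem1, surj1, _, _⟩ := hI1.rst
    obtain ⟨inj2, mem2, surj2, _, _⟩ := hI2.rst
    have hb1 : Function.Bijective
        (fun k : Fin (n+1) => (⟨V1.1 k, mem1 k⟩ : {x // x ∈ D})) := by
      constructor
      · intro a b hab
        exact inj1 (congrArg Subtype.val hab)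
      · rintro ⟨b, hb⟩
        obtain ⟨k, hk⟩ := surj1 b hb
        exact ⟨k, Subtype.ext hk⟩
    have hb2 : Function.Bijective
        (fun k : Fin (n+1) => (⟨V2.1 k, mem2 k⟩ : {x // x ∈ D})) := by
      constructor
      · intro a b hab
        exact inj2 (congrArg Subtype.val hab)
      · rintro ⟨b, hb⟩
        obtain ⟨k, hk⟩ := surj2 b hb
        exact ⟨k, Subtype.ext hk⟩
    set e1 := Equiv.ofBijective _ hb1 with he1
    set e2 := Equiv.ofBijective _ hb2 with he2
    set g : Equiv.Perm (Fin (n+1)) := e1.trans e2.symm with hgdef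
    have hge : ∀ k, V2.1 (g k) = V1.1 k := by
      intro k
      have h := Equiv.apply_symm_apply e2 (e1 k)
      exact congrArg Subtype.val h
    have hww : ∀ k, w1 k = w2 (g k) := by
      intro k
      have t1 : Tfill V1.1 w1 (V1.1 k) = w1 k := Tfill_at inj1 w1 k
      have t2 : Tfill V2.1 w2 (V2.1 (g k)) = w2 (g k) := Tfill_at inj2 w2 (g k)
      rw [hge] at t2
      rw [← t1, ← t2, hT]
    have hw12 : w1 = w2 := dec_unique' hdec1 hdec2 g hww
    obtain ⟨π1, hπ1, hord1⟩ := hI1.ord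
    obtain ⟨π2, hπ2, hord2⟩ := hI2.ord
    have hπeq : ∀ a, π2 (g a) = π1 a := by
      intro a
      apply h0.1
      rw [← hπ2 (g a), hge, hπ1]
    have hrig : ∀ a b : Fin (n+1), a < b → rigid (V1.1 a) (V1.1 b) → g a < g b := by
      intro a b hab hr
      rcases lt_trichotomy (g a) (g b) with h | h | h
      · exact h
      · exact absurd (g.injective h) (ne_of_lt hab)
      · exfalso
        have hr2 : rigid (V2.1 (g b)) (V2.1 (g a)) := by
          rw [hge, hge]
          exact rigid_symm hr
        have hlt1 := hord2 (g b) (g a) h hr2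
        rw [hπeq, hπeq] at hlt1
        have hlt2 := hord1 a b hab hr
        exact absurd hlt2 (not_lt.mpr (le_of_lt hlt1))
    have hs1 := sort_conn (D := D) (τ0 := τ0) (invcA V1.2.2.1) V1 hI1 le_rfl
    have hs2 := sort_conn (D := D) (τ0 := τ0) (invcA V2.2.2.1) V2 hI2 le_rfl
    rw [hw1] at hs1
    rw [hw2] at hs2
    have hwg' : ∀ a, w1 a = w1 (g a) := by
      intro a
      conv_rhs => rw [hw12]
      exact hww a
    have hbub := bubble (D := D) w1 hdec1 V2.1 (invcD g) V1.1 g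
      (fun a => (hge a).symm) hI1.rst hwg' hrig le_rfl
    have hsymRR : Symmetric (fun a b : YBVertex n => HStep n D a b ∨ HStep n D b a) :=
      fun x y h => h.symm
    have c1 : Relation.ReflTransGen (fun a b => HStep n D a b ∨ HStep n D b a) V1
        (canonV V1.1 w1) := Relation.ReflTransGen.mono (fun _ _ h => Or.inl h) _ _ hs1
    have c2 : Relation.ReflTransGen (fun a b => HStep n D a b ∨ HStep n D b a) V2
        (canonV V2.1 w2) := Relation.ReflTransGen.mono (fun _ _ h => Or.inl h) _ _ hs2
    rw [← hw12] at c2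
    exact c1.trans (hbub.trans (@Std.Symm.symm _ _ (@Relation.ReflTransGen.stdSymm _ _ ⟨fun a b h => hsymRR h⟩) _ _ c2))
end Aux
/-- Two vertices of `G_λ` lie in the same connected component of `H_λ` (the
graph `G_λ` with affine edges removed, connectivity taken undirected) if and
only if `T(τ, v) = T(τ', v')`. -/
theorem HStep_connected_iff_Tfill_eq {n : ℕ} (D : Finset (ℕ × ℕ))
    (τ0 : Fin (n + 1) → ℕ × ℕ) (h0 : IsRST n D τ0)
    (V1 V2 : YBVertex n)
    (h1 : Relation.ReflTransGen (GStep n D) (rootVertex τ0) V1)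
    (h2 : Relation.ReflTransGen (GStep n D) (rootVertex τ0) V2)
    (w1 w2 : Fin (n + 1) → ℕ)
    (hdec1 : ∀ i j : Fin (n + 1), i ≤ j → w1 j ≤ w1 i)
    (horb1 : ∃ π : Equiv.Perm (Fin (n + 1)), V1.2.2.1 = fun k => w1 (π k))
    (hdec2 : ∀ i j : Fin (n + 1), i ≤ j → w2 j ≤ w2 i)
    (horb2 : ∃ π : Equiv.Perm (Fin (n + 1)), V2.2.2.1 = fun k => w2 (π k)) :
    Relation.ReflTransGen (fun a b => HStep n D a b ∨ HStep n D b a) V1 V2 ↔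
      Tfill V1.1 w1 = Tfill V2.1 w2 := by
  exact HStep_connected_iff_Tfill_eq' D τ0 h0 V1 V2 h1 h2 w1 w2 hdec1 horb1 hdec2 horb2
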